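/- Strict positivity of the curvature-induced kernel difference: let γ : ℝ → ℝ be continuous and not identically zero, let Γ be the curve reconstructed from γ, and let κ > 0. Then for all s ≠ s' the quantity K₀(κ|Γ(s) − Γ(s')|) − K₀(κ|s − s'|) is nonnegative (as an element of [0,∞], with the convention K₀(0) = +∞), and its integral over (s,s') ∈ ℝ², taken in [0,∞], is strictly positive: ∫_{ℝ²} [K₀(κ|Γ(s) − Γ(s')|) − K₀(κ|s − s'|)] ds ds' > 0. -/

import Mathlib

open MeasureTheory intervalIntegral

/-- `β(s₂,s₁) = ∫_{s₁}^{s₂} γ(ξ) dξ`. -/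
noncomputable def curvInt (γ : ℝ → ℝ) (s₂ s₁ : ℝ) : ℝ := ∫ ξ in s₁..s₂, γ ξ

/-- First component of the curve reconstructed from the signed curvature `γ`. -/
noncomputable def curveX (γ : ℝ → ℝ) (s : ℝ) : ℝ :=
  ∫ ξ in (0:ℝ)..s, Real.cos (curvInt γ ξ 0)

/-- Second component of the curve reconstructed from the signed curvature `γ`. -/
noncomputable def curveY (γ : ℝ → ℝ) (s : ℝ) : ℝ :=
  -∫ ξ in (0:ℝ)..s, Real.sin (curvInt γ ξ 0)

open scoped ENNReal

/-- The Macdonald function `K₀(x) = ∫₀^∞ exp(−x cosh t) dt` for `x > 0`. -/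
noncomputable def K0 (x : ℝ) : ℝ := ∫ t in Set.Ioi (0:ℝ), Real.exp (-x * Real.cosh t)

/-- The Macdonald function as a `[0,∞]`-valued function, with `K₀(0) = ∞`. -/
noncomputable def K0e (x : ℝ) : ℝ≥0∞ := if x = 0 then ⊤ else ENNReal.ofReal (K0 x)

/-- The chord length `|Γ(s) − Γ(s')|` of the reconstructed curve. -/
noncomputable def chordDist (γ : ℝ → ℝ) (s s' : ℝ) : ℝ :=
  Real.sqrt ((curveX γ s - curveX γ s') ^ 2 + (curveY γ s - curveY γ s') ^ 2)

section Helpers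

variable {γ : ℝ → ℝ}

lemma continuous_curvInt (hγ : Continuous γ) : Continuous (fun ξ => curvInt γ ξ 0) :=
  intervalIntegral.continuous_primitive (fun a b => hγ.intervalIntegrable a b) 0

lemma curvInt_sub (hγ : Continuous γ) (s s' : ℝ) :
    curvInt γ s 0 - curvInt γ s' 0 = ∫ ξ in s'..s, γ ξ := by
  have h := integral_add_adjacent_intervals (μ := volume) (a := (0:ℝ)) (b := s') (c := s)
    (hγ.intervalIntegrable 0 s') (hγ.intervalIntegrable s' s)
  simp only [curvInt]; linarith

lemma curveX_sub (hγ : Continuous γ) (s s' : ℝ) :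
    curveX γ s - curveX γ s' = ∫ ξ in s'..s, Real.cos (curvInt γ ξ 0) := by
  have hc : Continuous fun ξ => Real.cos (curvInt γ ξ 0) :=
    Real.continuous_cos.comp (continuous_curvInt hγ)
  have h := integral_add_adjacent_intervals (μ := volume) (a := (0:ℝ)) (b := s') (c := s)
    (hc.intervalIntegrable 0 s') (hc.intervalIntegrable s' s)
  simp only [curveX]; linarith

lemma curveY_sub (hγ : Continuous γ) (s s' : ℝ) :
    curveY γ s - curveY γ s' = -∫ ξ in s'..s, Real.sin (curvInt γ ξ 0) := by
  have hc : Continuous fun ξ => Real.sin (curvInt γ ξ 0) :=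
    Real.continuous_sin.comp (continuous_curvInt hγ)
  have h := integral_add_adjacent_intervals (μ := volume) (a := (0:ℝ)) (b := s') (c := s)
    (hc.intervalIntegrable 0 s') (hc.intervalIntegrable s' s)
  simp only [curveY]; linarith

lemma chord_phase (hγ : Continuous γ) (θ s s' : ℝ) :
    (curveX γ s - curveX γ s') * Real.cos θ + (curveY γ s - curveY γ s') * Real.sin θ
      = ∫ ξ in s'..s, Real.cos (θ + curvInt γ ξ 0) := by
  have hB := continuous_curvInt hγ
  have hc : Continuous fun ξ => Real.cos θ * Real.cos (curvInt γ ξ 0) :=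
    continuous_const.mul (Real.continuous_cos.comp hB)
  have hs : Continuous fun ξ => Real.sin θ * Real.sin (curvInt γ ξ 0) :=
    continuous_const.mul (Real.continuous_sin.comp hB)
  have : ∫ ξ in s'..s, Real.cos (θ + curvInt γ ξ 0)
      = ∫ ξ in s'..s, (Real.cos θ * Real.cos (curvInt γ ξ 0)
          - Real.sin θ * Real.sin (curvInt γ ξ 0)) := by
    congr 1; ext ξ; rw [Real.cos_add]
  rw [this, integral_sub (hc.intervalIntegrable _ _) (hs.intervalIntegrable _ _),
    intervalIntegral.integral_const_mul, intervalIntegral.integral_const_mul, curveX_sub hγ, curveY_sub hγ]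
  ring

lemma chordDist_eq_abs (s s' : ℝ) :
    chordDist γ s s' = ‖(⟨curveX γ s - curveX γ s', curveY γ s - curveY γ s'⟩ : ℂ)‖ := by
  rw [Complex.norm_def, Complex.normSq_mk, chordDist]
  congr 1; ring

lemma chordDist_key (hγ : Continuous γ) {s s' : ℝ} (h : s' ≤ s) :
    chordDist γ s s' = 0 ∨
      ∃ θ, chordDist γ s s' = ∫ ξ in s'..s, Real.cos (θ + curvInt γ ξ 0) := by
  set z : ℂ := ⟨curveX γ s - curveX γ s', curveY γ s - curveY γ s'⟩ with hz
  by_cases h0 : z = 0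
  · left; rw [chordDist_eq_abs, ← hz, h0, norm_zero]
  · right
    refine ⟨Complex.arg z, ?_⟩
    have hr : (0:ℝ) < ‖z‖ := by
      simpa [norm_pos_iff] using h0
    have hcos := Complex.cos_arg h0
    have hsin := Complex.sin_arg z
    have hre : z.re = curveX γ s - curveX γ s' := rfl
    have him : z.im = curveY γ s - curveY γ s' := rfl
    have hsq : z.re ^ 2 + z.im ^ 2 = (‖z‖) ^ 2 := by
      rw [Complex.sq_norm, Complex.normSq_apply]; ring
    rw [pow_two, pow_two, pow_two, hre, him] at hsq
    rw [chordDist_eq_abs, ← hz, ← chord_phase hγ, ← hre, ← him, hcos, hsin]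
    field_simp
    linarith [hsq]

lemma chordDist_le (hγ : Continuous γ) {s s' : ℝ} (h : s' ≤ s) :
    chordDist γ s s' ≤ s - s' := by
  rcases chordDist_key hγ h with h0 | ⟨θ, hθ⟩
  · rw [h0]; linarith
  · rw [hθ]
    calc ∫ ξ in s'..s, Real.cos (θ + curvInt γ ξ 0) ≤ ∫ ξ in s'..s, (1:ℝ) := by
          refine integral_mono_on h
            (((Real.continuous_cos.comp (continuous_const.add (continuous_curvInt hγ)))).intervalIntegrable _ _)
            (intervalIntegrable_const) fun ξ _ => Real.cos_le_one _
      _ = s - s' := by simp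

lemma chordDist_symm (s s' : ℝ) : chordDist γ s s' = chordDist γ s' s := by
  rw [chordDist, chordDist]; ring_nf

lemma exists_cos_lt_one {a b : ℝ} (hab : a < b) :
    ∃ v ∈ Set.Icc a b, Real.cos v < 1 := by
  have hπ := Real.pi_pos
  obtain ⟨e, he, heb, heπ⟩ : ∃ e : ℝ, 0 < e ∧ e ≤ b - a ∧ e ≤ Real.pi :=
    ⟨min (b - a) Real.pi, lt_min (by linarith) hπ, min_le_left _ _, min_le_right _ _⟩
  have hv1 : a + e/2 ∈ Set.Icc a b := ⟨by linarith, by linarith⟩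
  have hv2 : a + e/4 ∈ Set.Icc a b := ⟨by linarith, by linarith⟩
  by_contra hcon
  push_neg at hcon
  have h1 : Real.cos (a + e/2) = 1 := le_antisymm (Real.cos_le_one _) (hcon _ hv1)
  have h2 : Real.cos (a + e/4) = 1 := le_antisymm (Real.cos_le_one _) (hcon _ hv2)
  obtain ⟨n, hn⟩ := (Real.cos_eq_one_iff _).1 h1
  obtain ⟨m, hm⟩ := (Real.cos_eq_one_iff _).1 h2
  have hd : ((n:ℝ) - (m:ℝ)) * (2 * Real.pi) = e/4 := by
    rw [sub_mul, hn, hm]; ring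
  have hne : n ≠ m := by
    rintro rfl
    rw [sub_self, zero_mul] at hd
    linarith
  rcases hne.lt_or_gt with hlt | hlt
  · have h1' : (n:ℝ) - (m:ℝ) ≤ -1 := by
      have : (n - m : ℤ) ≤ -1 := by omega
      have h2' : ((n - m : ℤ) : ℝ) ≤ ((-1 : ℤ) : ℝ) := Int.cast_le.2 this
      push_cast at h2'
      linarith
    nlinarith
  · have h1' : (1:ℝ) ≤ (n:ℝ) - (m:ℝ) := by
      have : (1:ℤ) ≤ n - m := by omega
      have h2' : ((1 : ℤ) : ℝ) ≤ ((n - m : ℤ) : ℝ) := Int.cast_le.2 this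
      push_cast at h2'
      linarith
    nlinarith

lemma chordDist_lt (hγ : Continuous γ) {s s' : ℝ} (h : s' < s)
    (hb : curvInt γ s 0 ≠ curvInt γ s' 0) :
    chordDist γ s s' < s - s' := by
  rcases chordDist_key hγ h.le with h0 | ⟨θ, hθ⟩
  · rw [h0]; linarith
  · rw [hθ]
    set f : ℝ → ℝ := fun ξ => θ + curvInt γ ξ 0 with hf_def
    have hfcont : Continuous f := continuous_const.add (continuous_curvInt hγ)
    have hne' : f s' ≠ f s := fun hh => hb (by
      have : θ + curvInt γ s' 0 = θ + curvInt γ s 0 := hh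
      linarith)
    have hminmax : min (f s') (f s) < max (f s') (f s) := min_lt_max.2 hne'
    obtain ⟨v, hv, hvcos⟩ := exists_cos_lt_one hminmax
    have hvmem : v ∈ Set.uIcc (f s') (f s) := hv
    obtain ⟨ξ, hξ, hfξ⟩ := intermediate_value_uIcc (hfcont.continuousOn) hvmem
    have hξ' : ξ ∈ Set.Icc s' s := by rwa [Set.uIcc_of_le h.le] at hξ
    have hlt := integral_lt_integral_of_continuousOn_of_le_of_exists_lt h
      ((Real.continuous_cos.comp hfcont).continuousOn) continuousOn_const
      (fun x _ => Real.cos_le_one _) ⟨ξ, hξ', by rw [Function.comp, hfξ]; exact hvcos⟩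
    calc (∫ ξ in s'..s, Real.cos (θ + curvInt γ ξ 0)) < ∫ _ in s'..s, (1:ℝ) := hlt
      _ = s - s' := by simp

lemma curvInt_ne (hγ : Continuous γ) {a b : ℝ} (hab : a < b)
    (h0 : ∀ ξ ∈ Set.Icc a b, γ ξ ≠ 0) : curvInt γ b 0 ≠ curvInt γ a 0 := by
  have key : ∀ g : ℝ → ℝ, Continuous g → (∀ ξ ∈ Set.Icc a b, g ξ ≠ 0) → 0 < g a →
      0 < ∫ ξ in a..b, g ξ := by
    intro g hg hg0 hga
    refine intervalIntegral_pos_of_pos_on (hg.intervalIntegrable a b) ?_ hab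
    intro x hx
    by_contra hle
    push_neg at hle
    have hxmem : x ∈ Set.Icc a b := ⟨hx.1.le, hx.2.le⟩
    have hxlt : g x < 0 := lt_of_le_of_ne hle (hg0 x hxmem)
    have hmem : (0:ℝ) ∈ Set.uIcc (g a) (g x) :=
      Set.mem_uIcc.2 (Or.inr ⟨hxlt.le, hga.le⟩)
    obtain ⟨ξ, hξ, hgξ⟩ := intermediate_value_uIcc (hg.continuousOn) hmem
    have hξ2 : ξ ∈ Set.Icc a b := by
      rw [Set.uIcc_of_le hx.1.le] at hξ
      exact ⟨hξ.1, hξ.2.trans hx.2.le⟩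
    exact hg0 ξ hξ2 hgξ
  have hsub : curvInt γ b 0 - curvInt γ a 0 = ∫ ξ in a..b, γ ξ := curvInt_sub hγ b a
  have hint : (∫ ξ in a..b, γ ξ) ≠ 0 := by
    rcases lt_or_gt_of_ne (h0 a ⟨le_refl a, hab.le⟩) with hneg | hpos
    · have := key (fun ξ => -γ ξ) hγ.neg (fun ξ hξ => neg_ne_zero.2 (h0 ξ hξ))
        (show (0:ℝ) < -γ a by linarith)
      rw [intervalIntegral.integral_neg] at this
      linarith
    · exact (key γ hγ h0 hpos).ne'
  intro hcontra
  rw [hcontra, sub_self] at hsub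
  exact hint hsub.symm

lemma self_le_cosh {t : ℝ} (ht : 0 ≤ t) : t ≤ Real.cosh t := by
  rcases eq_or_lt_of_le ht with h | h
  · simpa [← h] using Real.one_le_cosh 0
  · exact le_of_lt ((Real.self_lt_sinh_iff.2 h).trans (Real.sinh_lt_cosh t))

lemma integrableOn_K0 {x : ℝ} (hx : 0 < x) :
    IntegrableOn (fun t => Real.exp (-x * Real.cosh t)) (Set.Ioi (0:ℝ)) := by
  have h1 : IntegrableOn (fun t => Real.exp (-x * t)) (Set.Ioi (0:ℝ)) :=
    exp_neg_integrableOn_Ioi 0 hx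
  refine h1.integrable.mono ?_ ?_
  · exact (Real.continuous_exp.comp ((continuous_const.mul Real.continuous_cosh))).aestronglyMeasurable
  · refine (ae_restrict_iff' measurableSet_Ioi).2 (ae_of_all _ fun t ht => ?_)
    have h2 : t ≤ Real.cosh t := self_le_cosh (le_of_lt ht)
    simp only [Real.norm_eq_abs, Real.abs_exp]
    exact Real.exp_le_exp.2 (by nlinarith)

lemma K0_pos {x : ℝ} (hx : 0 < x) : 0 < K0 x := by
  rw [K0, setIntegral_pos_iff_support_of_nonneg_ae
    (ae_of_all _ fun t => (Real.exp_pos _).le) (integrableOn_K0 hx)]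
  have : Function.support (fun t => Real.exp (-x * Real.cosh t)) = Set.univ := by
    ext t; simp [Function.support, (Real.exp_pos _).ne']
  rw [this, Set.univ_inter, Real.volume_Ioi]
  exact ENNReal.zero_lt_top

lemma K0_anti {a b : ℝ} (ha : 0 < a) (hab : a ≤ b) : K0 b ≤ K0 a := by
  refine setIntegral_mono_on (integrableOn_K0 (lt_of_lt_of_le ha hab)) (integrableOn_K0 ha)
    measurableSet_Ioi fun t _ => ?_
  have := Real.one_le_cosh t
  exact Real.exp_le_exp.2 (by nlinarith)

lemma K0_gap {a b M : ℝ} (ha : 0 < a) (hab : a ≤ b) (hbM : b ≤ M) :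
    Real.exp (-M * Real.cosh 1) * (1 - Real.exp (-(b - a))) ≤ K0 a - K0 b := by
  have hb : 0 < b := lt_of_lt_of_le ha hab
  have hint : IntegrableOn
      (fun t => Real.exp (-a * Real.cosh t) - Real.exp (-b * Real.cosh t)) (Set.Ioi (0:ℝ)) :=
    (integrableOn_K0 ha).sub (integrableOn_K0 hb)
  have hnonneg : ∀ t : ℝ, 0 ≤ Real.exp (-a * Real.cosh t) - Real.exp (-b * Real.cosh t) := by
    intro t
    have := Real.one_le_cosh t
    have := Real.exp_le_exp.2 (show -b * Real.cosh t ≤ -a * Real.cosh t by nlinarith)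
    linarith
  have hKdiff : K0 a - K0 b
      = ∫ t in Set.Ioi (0:ℝ), (Real.exp (-a * Real.cosh t) - Real.exp (-b * Real.cosh t)) := by
    rw [K0, K0, integral_sub (integrableOn_K0 ha) (integrableOn_K0 hb)]
  set c : ℝ := Real.exp (-M * Real.cosh 1) * (1 - Real.exp (-(b - a))) with hc
  have hstep1 : ∫ t in Set.Ioo (0:ℝ) 1, (Real.exp (-a * Real.cosh t) - Real.exp (-b * Real.cosh t))
      ≤ ∫ t in Set.Ioi (0:ℝ), (Real.exp (-a * Real.cosh t) - Real.exp (-b * Real.cosh t)) := by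
    refine setIntegral_mono_set hint (ae_of_all _ hnonneg) (HasSubset.Subset.eventuallyLE ?_)
    intro t ht; exact ht.1
  have hstep2 : c * (volume (Set.Ioo (0:ℝ) 1)).toReal
      ≤ ∫ t in Set.Ioo (0:ℝ) 1, (Real.exp (-a * Real.cosh t) - Real.exp (-b * Real.cosh t)) := by
    refine setIntegral_ge_of_const_le_real measurableSet_Ioo (by simp [Real.volume_Ioo]) ?_
      (hint.mono_set fun t ht => ht.1)
    intro t ht
    have hct1 : Real.cosh t ≤ Real.cosh 1 := by
      rw [Real.cosh_le_cosh]
      rw [abs_of_pos ht.1, abs_one]; exact ht.2.le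
    have hct : 1 ≤ Real.cosh t := Real.one_le_cosh t
    have hsplit : Real.exp (-b * Real.cosh t)
        = Real.exp (-a * Real.cosh t) * Real.exp (-(b - a) * Real.cosh t) := by
      rw [← Real.exp_add]; ring_nf
    have h1 : Real.exp (-M * Real.cosh 1) ≤ Real.exp (-a * Real.cosh t) :=
      Real.exp_le_exp.2 (by nlinarith)
    have h2 : Real.exp (-(b - a) * Real.cosh t) ≤ Real.exp (-(b - a)) :=
      Real.exp_le_exp.2 (by nlinarith)
    have h3 : (0:ℝ) ≤ 1 - Real.exp (-(b - a)) := by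
      have : Real.exp (-(b - a)) ≤ 1 := Real.exp_le_one_iff.2 (by linarith)
      linarith
    rw [hsplit, hc]
    nlinarith [Real.exp_pos (-a * Real.cosh t), Real.exp_pos (-(b-a) * Real.cosh t)]
  have : (volume (Set.Ioo (0:ℝ) 1)).toReal = 1 := by simp [Real.volume_Ioo]
  rw [this, mul_one] at hstep2
  linarith [hKdiff ▸ le_trans hstep2 hstep1]

end Helpers

section MainTheorem

open Real Set

/-- for a continuous, not identically vanishing curvature `γ` and `κ > 0`,
the kernel difference `K₀(κ|Γ(s) − Γ(s')|) − K₀(κ|s − s'|)` is nonnegative off the diagonal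
(that is, `K₀(κ|s−s'|) ≤ K₀(κ|Γ(s)−Γ(s')|)` in `[0,∞]`), and its integral over `ℝ²`,
taken in `[0,∞]`, is strictly positive. -/
theorem kernel_difference_positive (γ : ℝ → ℝ) (hγ : Continuous γ)
    (hne : ∃ s : ℝ, γ s ≠ 0) (κ : ℝ) (hκ : 0 < κ) :
    (∀ s s' : ℝ, s ≠ s' → K0e (κ * |s - s'|) ≤ K0e (κ * chordDist γ s s')) ∧
    0 < ∫⁻ p : ℝ × ℝ, (K0e (κ * chordDist γ p.1 p.2) - K0e (κ * |p.1 - p.2|)) := by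
  constructor
  · have key : ∀ s s' : ℝ, s' < s → K0e (κ * |s - s'|) ≤ K0e (κ * chordDist γ s s') := by
      intro s s' h
      have hchle : chordDist γ s s' ≤ s - s' := chordDist_le hγ h.le
      have habs : |s - s'| = s - s' := abs_of_pos (by linarith)
      by_cases hc0 : chordDist γ s s' = 0
      · rw [hc0, mul_zero]
        simp [K0e]
      · have hcpos : 0 < chordDist γ s s' :=
          lt_of_le_of_ne (Real.sqrt_nonneg _) (Ne.symm hc0)
        have ha : 0 < κ * chordDist γ s s' := mul_pos hκ hcpos
        have hb : 0 < κ * |s - s'| := mul_pos hκ (by rw [habs]; linarith)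
        rw [K0e, K0e, if_neg ha.ne', if_neg hb.ne']
        refine ENNReal.ofReal_le_ofReal (K0_anti ha ?_)
        rw [habs]
        nlinarith
    intro s s' hss
    rcases lt_or_gt_of_ne hss with h | h
    · have h2 := key s' s h
      rwa [abs_sub_comm s' s, chordDist_symm] at h2
    · exact key s s' h
  · obtain ⟨s₀, hs₀⟩ := hne
    have hopenpre : IsOpen (γ ⁻¹' ({(0:ℝ)}ᶜ)) := (isOpen_compl_singleton).preimage hγ
    obtain ⟨δ', hδ', hball⟩ := Metric.isOpen_iff.1 hopenpre s₀ hs₀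
    set δ := δ'/2 with hδdef
    have hδ : 0 < δ := by positivity
    have hIcc : ∀ ξ ∈ Set.Icc (s₀ - δ) (s₀ + δ), γ ξ ≠ 0 := by
      intro ξ hξ
      refine hball (show dist ξ s₀ < δ' from ?_)
      obtain ⟨h1, h2⟩ := hξ
      rw [Real.dist_eq, abs_sub_lt_iff]
      constructor <;> linarith
    set S : Set (ℝ × ℝ) :=
      Set.Icc (s₀ + δ/4) (s₀ + δ/2) ×ˢ Set.Icc (s₀ - δ/2) (s₀ - δ/4) with hSdef
    have hpS : ∀ p ∈ S, p.2 < p.1 ∧ chordDist γ p.1 p.2 < p.1 - p.2 ∧ p.1 - p.2 ≤ δ := by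
      intro p hp
      obtain ⟨⟨h1, h2⟩, h3, h4⟩ := hp
      have hlt : p.2 < p.1 := by linarith
      have hsub : Set.Icc p.2 p.1 ⊆ Set.Icc (s₀ - δ) (s₀ + δ) := by
        intro ξ hξ
        exact ⟨by linarith [hξ.1], by linarith [hξ.2]⟩
      have hcne := curvInt_ne hγ hlt (fun ξ hξ => hIcc ξ (hsub hξ))
      exact ⟨hlt, chordDist_lt hγ hlt hcne, by linarith⟩
    have hScomp : IsCompact S := (isCompact_Icc).prod isCompact_Icc
    have hSne : S.Nonempty :=
      ⟨(s₀ + δ/4, s₀ - δ/4), ⟨le_refl _, by linarith⟩, ⟨by linarith, le_refl _⟩⟩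
    have hXc : Continuous (curveX γ) :=
      intervalIntegral.continuous_primitive
        (fun a b => ((Real.continuous_cos.comp (continuous_curvInt hγ)).intervalIntegrable a b)) 0
    have hYc : Continuous (curveY γ) := by
      have : Continuous fun s => ∫ ξ in (0:ℝ)..s, Real.sin (curvInt γ ξ 0) :=
        intervalIntegral.continuous_primitive
          (fun a b => ((Real.continuous_sin.comp (continuous_curvInt hγ)).intervalIntegrable a b)) 0
      exact this.neg
    have hchordcont : Continuous fun p : ℝ × ℝ => chordDist γ p.1 p.2 := by
      apply Real.continuous_sqrt.comp
      exact (((hXc.comp continuous_fst).sub (hXc.comp continuous_snd)).pow 2).add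
        (((hYc.comp continuous_fst).sub (hYc.comp continuous_snd)).pow 2)
    obtain ⟨p₀, hp₀S, hp₀min⟩ := hScomp.exists_isMinOn hSne
      (((continuous_fst.sub continuous_snd).sub hchordcont).continuousOn :
        ContinuousOn (fun p : ℝ × ℝ => (p.1 - p.2) - chordDist γ p.1 p.2) S)
    set ε := (p₀.1 - p₀.2) - chordDist γ p₀.1 p₀.2 with hεdef
    have hε : 0 < ε := by
      have h := hpS p₀ hp₀S
      rw [hεdef]; linarith [h.2.1]
    set c₀ := Real.exp (-(κ*δ) * Real.cosh 1) * (1 - Real.exp (-(κ*ε))) with hc₀def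
    have hc₀ : 0 < c₀ := by
      have hlt1 : Real.exp (-(κ*ε)) < 1 := by
        rw [Real.exp_lt_one_iff]
        nlinarith
      exact mul_pos (Real.exp_pos _) (by linarith)
    have hbound : ∀ p ∈ S,
        ENNReal.ofReal c₀ ≤ K0e (κ * chordDist γ p.1 p.2) - K0e (κ * |p.1 - p.2|) := by
      intro p hp
      obtain ⟨hlt, hchlt, hle⟩ := hpS p hp
      have habs : |p.1 - p.2| = p.1 - p.2 := abs_of_pos (by linarith)
      have hεp : chordDist γ p.1 p.2 ≤ (p.1 - p.2) - ε := by
        have h := isMinOn_iff.1 hp₀min p hp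
        simp only [Pi.sub_apply] at h
        rw [hεdef] at *
        linarith
      have hch0 : 0 ≤ chordDist γ p.1 p.2 := Real.sqrt_nonneg _
      have hb0 : (0:ℝ) < κ * |p.1 - p.2| := mul_pos hκ (by rw [habs]; linarith)
      by_cases hc : chordDist γ p.1 p.2 = 0
      · have h0e : K0e 0 = ⊤ := by simp [K0e]
        rw [hc, mul_zero, h0e, K0e, if_neg hb0.ne',
          ENNReal.top_sub ENNReal.ofReal_ne_top]
        exact le_top
      · have hcpos : 0 < chordDist γ p.1 p.2 := lt_of_le_of_ne hch0 (Ne.symm hc)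
        have ha0 : 0 < κ * chordDist γ p.1 p.2 := mul_pos hκ hcpos
        rw [K0e, if_neg ha0.ne', K0e, if_neg hb0.ne',
          ← ENNReal.ofReal_sub _ (le_of_lt (K0_pos hb0))]
        refine ENNReal.ofReal_le_ofReal ?_
        have hab : κ * chordDist γ p.1 p.2 ≤ κ * |p.1 - p.2| := by
          rw [habs]; nlinarith
        have hbM : κ * |p.1 - p.2| ≤ κ * δ := by
          rw [habs]; nlinarith
        have hgap := K0_gap ha0 hab hbM
        refine le_trans ?_ hgap
        rw [hc₀def]
        refine mul_le_mul_of_nonneg_left ?_ (Real.exp_pos _).le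
        have hdiff : κ * ε ≤ κ * |p.1 - p.2| - κ * chordDist γ p.1 p.2 := by
          rw [habs]; nlinarith
        have := Real.exp_le_exp.2 (show -(κ * |p.1 - p.2| - κ * chordDist γ p.1 p.2) ≤ -(κ*ε)
          by linarith)
        linarith
    have hSmeas : MeasurableSet S := measurableSet_Icc.prod measurableSet_Icc
    have hmono : ∀ p : ℝ × ℝ, S.indicator (fun _ => ENNReal.ofReal c₀) p
        ≤ K0e (κ * chordDist γ p.1 p.2) - K0e (κ * |p.1 - p.2|) := by
      intro p
      by_cases hp : p ∈ S
      · rw [Set.indicator_of_mem hp]; exact hbound p hp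
      · rw [Set.indicator_of_notMem hp]; exact zero_le
    have hvol : volume S = ENNReal.ofReal (δ/4) * ENNReal.ofReal (δ/4) := by
      rw [hSdef, MeasureTheory.Measure.volume_eq_prod, MeasureTheory.Measure.prod_prod,
        Real.volume_Icc, Real.volume_Icc]
      congr 1 <;> congr 1 <;> ring
    calc (0:ENNReal) < ENNReal.ofReal c₀ * volume S := by
          rw [hvol]
          have h4 : (0:ℝ) < δ/4 := by linarith
          exact ENNReal.mul_pos (ENNReal.ofReal_pos.2 hc₀).ne'
            (ENNReal.mul_pos (ENNReal.ofReal_pos.2 h4).ne' (ENNReal.ofReal_pos.2 h4).ne').ne'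
      _ = ∫⁻ p : ℝ × ℝ, S.indicator (fun _ => ENNReal.ofReal c₀) p := by
          rw [MeasureTheory.lintegral_indicator_const hSmeas]
      _ ≤ _ := MeasureTheory.lintegral_mono hmono

end MainTheorem
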